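/- Let G be a finite simple graph with no isolated vertex and let D ⊆ V. Then D is the unique minimum paired-dominating set of G if and only if every minimum ev-dominating set M of G satisfies V_G(M) = D. -/

import Mathlib

open SimpleGraph

variable {V : Type*}

/-- `D` is a dominating set of `G`: every vertex outside `D` has a neighbor in `D`. -/
def IsDomSet (G : SimpleGraph V) (D : Set V) : Prop :=
  ∀ v ∉ D, ∃ u ∈ D, G.Adj u v

/-- The edge `e` ev-dominates the vertex `v`: `e` is incident to `v` or to a neighbor of `v`. -/
def EvDom (G : SimpleGraph V) (e : Sym2 V) (v : V) : Prop :=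
  v ∈ e ∨ ∃ u ∈ e, G.Adj u v

/-- `M` is an edge-vertex dominating set of `G`. -/
def IsEvDomSet (G : SimpleGraph V) (M : Set (Sym2 V)) : Prop :=
  M ⊆ G.edgeSet ∧ ∀ v : V, ∃ e ∈ M, EvDom G e v

/-- `M` is a minimum edge-vertex dominating set of `G`. -/
def IsMinEvDomSet (G : SimpleGraph V) (M : Set (Sym2 V)) : Prop :=
  IsEvDomSet G M ∧ ∀ M' : Set (Sym2 V), IsEvDomSet G M' → M.ncard ≤ M'.ncard

/-- The edge-vertex domination number `γ_ev(G)`. -/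
noncomputable def evNum (G : SimpleGraph V) : ℕ :=
  sInf {n | ∃ M : Set (Sym2 V), IsEvDomSet G M ∧ M.ncard = n}

/-- The set of all endpoints of edges in `M`. -/
def edgeVerts (M : Set (Sym2 V)) : Set V := {v | ∃ e ∈ M, v ∈ e}

/-- `M` is a perfect matching of the induced subgraph `G[D]`: a set of edges of `G`
with all endpoints in `D`, such that every vertex of `D` lies in exactly one edge of `M`. -/
def IsPMOn (G : SimpleGraph V) (D : Set V) (M : Set (Sym2 V)) : Prop :=
  M ⊆ G.edgeSet ∧ (∀ e ∈ M, ∀ v ∈ e, v ∈ D) ∧ ∀ v ∈ D, ∃! e, e ∈ M ∧ v ∈ e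

/-- `D` is a paired-dominating set of `G`. -/
def IsPairedDomSet (G : SimpleGraph V) (D : Set V) : Prop :=
  IsDomSet G D ∧ ∃ M : Set (Sym2 V), IsPMOn G D M

/-- `D` is a minimum paired-dominating set of `G`. -/
def IsMinPairedDomSet (G : SimpleGraph V) (D : Set V) : Prop :=
  IsPairedDomSet G D ∧ ∀ D' : Set V, IsPairedDomSet G D' → D.ncard ≤ D'.ncard

/-- The paired-domination number `γ_pr(G)`. -/
noncomputable def prNum (G : SimpleGraph V) : ℕ :=
  sInf {n | ∃ D : Set V, IsPairedDomSet G D ∧ D.ncard = n}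

/-- No two distinct edges of `M` share a vertex. -/
def NoSharedVertex (M : Set (Sym2 V)) : Prop :=
  ∀ e ∈ M, ∀ f ∈ M, e ≠ f → ∀ v : V, v ∈ e → v ∉ f

/-- `G` has no isolated vertex. -/
def NoIsolated (G : SimpleGraph V) : Prop := ∀ v : V, ∃ u, G.Adj u v

section Aux
variable [Fintype V] {G : SimpleGraph V}
set_option linter.unusedSectionVars false

/-- endpoints of an ev-dominating set form a dominating set -/
lemma aux_evdom_dom {M : Set (Sym2 V)} (hM : IsEvDomSet G M) : IsDomSet G (edgeVerts M) := by
  intro v hv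
  obtain ⟨e, heM, hev⟩ := hM.2 v
  rcases hev with h | ⟨u, hue, hadj⟩
  · exact absurd ⟨e, heM, h⟩ hv
  · exact ⟨u, ⟨e, heM, hue⟩, hadj⟩

lemma aux_noshared_mono {M N : Set (Sym2 V)} (h : M ⊆ N) (hN : NoSharedVertex N) :
    NoSharedVertex M := fun e he f hf hef v hve => hN e (h he) f (h hf) hef v hve

lemma aux_edgeVerts_mono {M N : Set (Sym2 V)} (h : M ⊆ N) : edgeVerts M ⊆ edgeVerts N := by
  rintro v ⟨e, he, hve⟩; exact ⟨e, h he, hve⟩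

/-- cardinality of the vertex set of a matching -/
lemma aux_matching_card : ∀ (n : ℕ) (M : Set (Sym2 V)), M.ncard = n → M ⊆ G.edgeSet →
    NoSharedVertex M → (edgeVerts M).ncard = 2 * M.ncard := by
  intro n
  induction n with
  | zero =>
    intro M hn _ _
    rw [Set.ncard_eq_zero (Set.toFinite M)] at hn
    subst hn
    have : edgeVerts (∅ : Set (Sym2 V)) = ∅ := by
      ext v; simp [edgeVerts]
    simp [this]
  | succ n ih =>
    intro M hn hsub hm
    have hne : M.Nonempty := by
      rw [← Set.ncard_pos (Set.toFinite M), hn]; omega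
    obtain ⟨e, he⟩ := hne
    induction e using Sym2.ind with
    | _ u v =>
    have huv : u ≠ v := by
      intro h; exact (G.not_isDiag_of_mem_edgeSet (hsub he)) (by simp [h])
    have hM' : (M \ {s(u, v)}).ncard = n := by
      have := Set.ncard_diff_singleton_add_one he (Set.toFinite M)
      omega
    have hrec := ih (M \ {s(u, v)}) hM' (fun x hx => hsub hx.1)
      (aux_noshared_mono Set.diff_subset hm)
    have hsplit : edgeVerts M = {u, v} ∪ edgeVerts (M \ {s(u, v)}) := by
      ext x
      constructor
      · rintro ⟨g, hg, hxg⟩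
        by_cases hge : g = s(u, v)
        · subst hge; rw [Sym2.mem_iff] at hxg
          rcases hxg with h | h <;> simp [h]
        · exact Or.inr ⟨g, ⟨hg, hge⟩, hxg⟩
      · rintro (h | ⟨g, hg, hxg⟩)
        · exact ⟨s(u, v), he, by rw [Sym2.mem_iff]; simpa using h⟩
        · exact ⟨g, hg.1, hxg⟩
    have hdisj : Disjoint ({u, v} : Set V) (edgeVerts (M \ {s(u, v)})) := by
      rw [Set.disjoint_left]
      rintro x hx ⟨g, ⟨hg, hge⟩, hxg⟩
      have hxe : x ∈ s(u, v) := by rw [Sym2.mem_iff]; simpa using hx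
      exact hm s(u,v) he g hg (fun h => hge h.symm) x hxe hxg
    rw [hsplit, Set.ncard_union_eq hdisj (Set.toFinite _) (Set.toFinite _),
      Set.ncard_pair huv, hrec, hn, hM']
    ring

/-- perfect matching of a paired-dominating set: the key facts -/
lemma aux_pm_facts {D' : Set V} {P : Set (Sym2 V)} (hdom : IsDomSet G D')
    (hpm : IsPMOn G D' P) :
    IsEvDomSet G P ∧ NoSharedVertex P ∧ edgeVerts P = D' := by
  obtain ⟨hsub, hend, huniq⟩ := hpm
  have hns : NoSharedVertex P := by
    intro e he f hf hef x hxe hxf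
    have hxD : x ∈ D' := hend e he x hxe
    obtain ⟨g, _, hg⟩ := huniq x hxD
    exact hef ((hg e ⟨he, hxe⟩).trans (hg f ⟨hf, hxf⟩).symm)
  have heq : edgeVerts P = D' := by
    ext x
    constructor
    · rintro ⟨e, he, hxe⟩; exact hend e he x hxe
    · intro hx
      obtain ⟨e, ⟨heP, hxe⟩, _⟩ := huniq x hx
      exact ⟨e, heP, hxe⟩
  refine ⟨⟨hsub, ?_⟩, hns, heq⟩
  intro v
  by_cases hv : v ∈ D'
  · obtain ⟨e, ⟨heP, hve⟩, _⟩ := huniq v hv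
    exact ⟨e, heP, Or.inl hve⟩
  · obtain ⟨u, huD, hadj⟩ := hdom v hv
    obtain ⟨e, ⟨heP, hue⟩, _⟩ := huniq u huD
    exact ⟨e, heP, Or.inr ⟨u, hue, hadj⟩⟩

/-- a minimum ev-dominating matching spans a minimum paired-dominating set -/
lemma aux_matching_min_paired {N : Set (Sym2 V)} (hmin : IsMinEvDomSet G N)
    (hm : NoSharedVertex N) : IsMinPairedDomSet G (edgeVerts N) := by
  have hpaired : IsPairedDomSet G (edgeVerts N) := by
    refine ⟨aux_evdom_dom hmin.1, N, hmin.1.1, fun e he v hv => ⟨e, he, hv⟩, ?_⟩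
    rintro v ⟨e, he, hve⟩
    refine ⟨e, ⟨he, hve⟩, ?_⟩
    rintro f ⟨hf, hvf⟩
    by_contra hne
    exact hm f hf e he hne v hvf hve
  refine ⟨hpaired, ?_⟩
  rintro D' ⟨hdom', P, hpm⟩
  obtain ⟨hPev, hPns, hPeq⟩ := aux_pm_facts hdom' hpm
  have h1 : (edgeVerts N).ncard = 2 * N.ncard := aux_matching_card _ N rfl hmin.1.1 hm
  have h2 : D'.ncard = 2 * P.ncard := by
    rw [← hPeq]; exact aux_matching_card _ P rfl hpm.1 hPns
  have h3 := hmin.2 P hPev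
  omega

end Aux

section Aux2
variable [Fintype V] {G : SimpleGraph V}
set_option linter.unusedSectionVars false

lemma aux_removal {M : Set (Sym2 V)} {e f : Sym2 V} {v a b : V}
    (hmin : IsMinEvDomSet G M) (he : e ∈ M) (hf : f ∈ M) (hef : e ≠ f)
    (hev : e = s(v, a)) (hfv : f = s(v, b)) :
    ∃ w, G.Adj b w ∧ w ∉ edgeVerts M := by
  by_contra hcon
  push_neg at hcon
  have hveM : v ∈ e := by rw [hev]; exact Sym2.mem_mk_left v a
  have hMf : IsEvDomSet G (M \ {f}) := by
    refine ⟨fun x hx => hmin.1.1 hx.1, ?_⟩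
    intro x
    obtain ⟨g, hg, hgx⟩ := hmin.1.2 x
    by_cases hgf : g = f
    · rw [hgf] at hgx
      have hadjvb : G.Adj v b := by
        have := hmin.1.1 hf; rwa [hfv, SimpleGraph.mem_edgeSet] at this
      have heMf : e ∈ M \ {f} := ⟨he, hef⟩
      rcases hgx with hx | ⟨u, huf, hadj⟩
      · rw [hfv, Sym2.mem_iff] at hx
        rcases hx with hx | hx
        · exact ⟨e, heMf, Or.inl (hx ▸ hveM)⟩
        · refine ⟨e, heMf, Or.inr ⟨v, hveM, ?_⟩⟩
          rw [hx]; exact hadjvb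
      · rw [hfv, Sym2.mem_iff] at huf
        rcases huf with hu | hu
        · rw [hu] at hadj
          exact ⟨e, heMf, Or.inr ⟨v, hveM, hadj⟩⟩
        · rw [hu] at hadj
          obtain ⟨h, hh, hxh⟩ := hcon x hadj
          by_cases hhf : h = f
          · rw [hhf, hfv, Sym2.mem_iff] at hxh
            rcases hxh with hx | hx
            · exact ⟨e, heMf, Or.inl (hx ▸ hveM)⟩
            · rw [hx] at hadj
              exact absurd hadj (G.irrefl)
          · exact ⟨h, ⟨hh, hhf⟩, Or.inl hxh⟩
    · exact ⟨g, ⟨hg, hgf⟩, hgx⟩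
  have h1 := hmin.2 _ hMf
  have h2 := Set.ncard_diff_singleton_add_one hf (Set.toFinite M)
  omega

lemma aux_swap {M : Set (Sym2 V)} {e f : Sym2 V} {v a b w : V}
    (hmin : IsMinEvDomSet G M) (he : e ∈ M) (hf : f ∈ M) (hef : e ≠ f)
    (hev : e = s(v, a)) (hfv : f = s(v, b)) (hw : G.Adj b w) (hwo : w ∉ edgeVerts M) :
    IsMinEvDomSet G (insert s(b, w) (M \ {f})) ∧
      edgeVerts (insert s(b, w) (M \ {f})) = insert w (edgeVerts M) ∧
      (insert s(b, w) (M \ {f})).ncard = M.ncard := by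
  set Mx := insert s(b, w) (M \ {f}) with hMx
  have hveM : v ∈ e := by rw [hev]; exact Sym2.mem_mk_left v a
  have hbf : b ∈ f := by rw [hfv]; exact Sym2.mem_mk_right v b
  have heMx : e ∈ Mx := Or.inr ⟨he, hef⟩
  have hbwMx : s(b, w) ∈ Mx := Or.inl rfl
  have hnew : s(b, w) ∉ M \ {f} := by
    rintro ⟨hmem, -⟩
    exact hwo ⟨s(b, w), hmem, Sym2.mem_mk_right b w⟩
  have hcard : Mx.ncard = M.ncard := by
    have h2 := Set.ncard_diff_singleton_add_one hf (Set.toFinite M)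
    rw [hMx, Set.ncard_insert_of_notMem hnew (Set.toFinite _)]
    omega
  have hev' : IsEvDomSet G Mx := by
    constructor
    · rintro x (hx | hx)
      · rw [hx, SimpleGraph.mem_edgeSet]; exact hw
      · exact hmin.1.1 hx.1
    · intro x
      obtain ⟨g, hg, hgx⟩ := hmin.1.2 x
      by_cases hgf : g = f
      · rw [hgf] at hgx
        rcases hgx with hx | ⟨u, huf, hadj⟩
        · rw [hfv, Sym2.mem_iff] at hx
          rcases hx with hx | hx
          · exact ⟨e, heMx, Or.inl (hx ▸ hveM)⟩
          · refine ⟨s(b, w), hbwMx, Or.inl ?_⟩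
            rw [hx]; exact Sym2.mem_mk_left b w
        · rw [hfv, Sym2.mem_iff] at huf
          rcases huf with hu | hu
          · rw [hu] at hadj
            exact ⟨e, heMx, Or.inr ⟨v, hveM, hadj⟩⟩
          · rw [hu] at hadj
            exact ⟨s(b, w), hbwMx, Or.inr ⟨b, Sym2.mem_mk_left b w, hadj⟩⟩
      · exact ⟨g, Or.inr ⟨hg, hgf⟩, hgx⟩
  refine ⟨⟨hev', fun M'' hM'' => hcard ▸ hmin.2 M'' hM''⟩, ?_, hcard⟩
  ext x
  constructor
  · rintro ⟨g, (hgbw | ⟨hg, hgf⟩), hxg⟩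
    · rw [hgbw, Sym2.mem_iff] at hxg
      rcases hxg with hx | hx
      · exact Or.inr ⟨f, hf, hx ▸ hbf⟩
      · exact Or.inl hx
    · exact Or.inr ⟨g, hg, hxg⟩
  · rintro (hx | ⟨g, hg, hxg⟩)
    · refine ⟨s(b, w), hbwMx, ?_⟩
      rw [hx]; exact Sym2.mem_mk_right b w
    · by_cases hgf : g = f
      · rw [hgf, hfv, Sym2.mem_iff] at hxg
        rcases hxg with hx | hx
        · exact ⟨e, heMx, hx ▸ hveM⟩
        · refine ⟨s(b, w), hbwMx, ?_⟩
          rw [hx]; exact Sym2.mem_mk_left b w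
      · exact ⟨g, Or.inr ⟨hg, hgf⟩, hxg⟩

end Aux2

section Aux3
variable [Fintype V] {G : SimpleGraph V}
set_option linter.unusedSectionVars false

lemma aux_pm_self {N : Set (Sym2 V)} (hsub : N ⊆ G.edgeSet) (hm : NoSharedVertex N) :
    IsPMOn G (edgeVerts N) N := by
  refine ⟨hsub, fun e he v hv => ⟨e, he, hv⟩, ?_⟩
  rintro x ⟨e, he, hxe⟩
  refine ⟨e, ⟨he, hxe⟩, ?_⟩
  rintro g ⟨hg, hxg⟩
  by_contra hne
  exact hm g hg e he hne x hxg hxe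

lemma aux_exists_min_evdom (hG : NoIsolated G) : ∃ M, IsMinEvDomSet G M := by
  have hedge : IsEvDomSet G G.edgeSet := by
    refine ⟨Set.Subset.rfl, ?_⟩
    intro v
    obtain ⟨u, hu⟩ := hG v
    exact ⟨s(u, v), (SimpleGraph.mem_edgeSet G).mpr hu, Or.inl (Sym2.mem_mk_right u v)⟩
  have hne : {n | ∃ M, IsEvDomSet G M ∧ M.ncard = n}.Nonempty := ⟨_, G.edgeSet, hedge, rfl⟩
  obtain ⟨M, hM, hMc⟩ := Nat.sInf_mem hne
  exact ⟨M, hM, fun M' hM' => hMc ▸ Nat.sInf_le ⟨M', hM', rfl⟩⟩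

lemma aux_shared_structure {M : Set (Sym2 V)} (h : ¬ NoSharedVertex M) :
    ∃ e ∈ M, ∃ f ∈ M, ∃ v a b : V, e ≠ f ∧ e = s(v, a) ∧ f = s(v, b) := by
  unfold NoSharedVertex at h
  push_neg at h
  obtain ⟨e, he, f, hf, hef, v, hve, hvf⟩ := h
  exact ⟨e, he, f, hf, v, Sym2.Mem.other hve, Sym2.Mem.other hvf, hef,
    (Sym2.other_spec hve).symm, (Sym2.other_spec hvf).symm⟩

lemma aux_exists_max_V (S : Set (Set (Sym2 V))) (hne : S.Nonempty) :
    ∃ M ∈ S, ∀ M' ∈ S, ¬ (edgeVerts M).ncard < (edgeVerts M').ncard := by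
  obtain ⟨M, hM, hmax⟩ := Set.Finite.exists_maximalFor (fun M => (edgeVerts M).ncard) S
    (Set.toFinite S) hne
  refine ⟨M, hM, fun M' hM' hlt => ?_⟩
  have : (edgeVerts M').ncard ≤ (edgeVerts M).ncard := hmax hM' (le_of_lt hlt)
  omega

lemma aux_exists_min_evdom_matching (hG : NoIsolated G) :
    ∃ M, IsMinEvDomSet G M ∧ NoSharedVertex M := by
  obtain ⟨M0, hM0⟩ := aux_exists_min_evdom hG
  obtain ⟨M, hM, hmax⟩ := aux_exists_max_V {M | IsMinEvDomSet G M} ⟨M0, hM0⟩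
  refine ⟨M, hM, ?_⟩
  by_contra hsh
  obtain ⟨e, he, f, hf, v, a, b, hef, hev, hfv⟩ := aux_shared_structure hsh
  obtain ⟨w, hw, hwo⟩ := aux_removal hM he hf hef hev hfv
  obtain ⟨hmin', heq, -⟩ := aux_swap hM he hf hef hev hfv hw hwo
  apply hmax _ hmin'
  rw [heq, Set.ncard_insert_of_notMem hwo (Set.toFinite _)]
  omega

lemma aux_forward_matching {D : Set V} (hD : IsMinPairedDomSet G D)
    (hu : ∀ D', IsMinPairedDomSet G D' → D' = D) :
    ∀ M, IsMinEvDomSet G M → NoSharedVertex M := by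
  by_contra hcon
  push_neg at hcon
  set S := {M : Set (Sym2 V) | IsMinEvDomSet G M ∧ ¬ NoSharedVertex M} with hS
  have hSne : S.Nonempty := by
    obtain ⟨M, h1, h2⟩ := hcon; exact ⟨M, h1, h2⟩
  obtain ⟨M, hMS, hmax⟩ := aux_exists_max_V S hSne
  obtain ⟨hMmin, hMsh⟩ := hMS
  obtain ⟨e, he, f, hf, v, a, b, hef, hev, hfv⟩ := aux_shared_structure hMsh
  -- any swap of M yields a matching whose vertex set is D
  have hswap : ∀ (e' f' : Sym2 V) (v' a' b' w' : V), e' ∈ M → f' ∈ M → e' ≠ f' →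
      e' = s(v', a') → f' = s(v', b') → G.Adj b' w' → w' ∉ edgeVerts M →
      NoSharedVertex (insert s(b', w') (M \ {f'})) ∧ insert w' (edgeVerts M) = D := by
    intro e' f' v' a' b' w' he' hf' hef' hev' hfv' hw' hwo'
    obtain ⟨hmin', heq', hcard'⟩ := aux_swap hMmin he' hf' hef' hev' hfv' hw' hwo'
    have hm' : NoSharedVertex (insert s(b', w') (M \ {f'})) := by
      by_contra hsh'
      apply hmax _ ⟨hmin', hsh'⟩
      rw [heq', Set.ncard_insert_of_notMem hwo' (Set.toFinite _)]
      omega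
    refine ⟨hm', ?_⟩
    rw [← heq']
    exact hu _ (aux_matching_min_paired hmin' hm')
  obtain ⟨w, hw, hwo⟩ := aux_removal hMmin he hf hef hev hfv
  obtain ⟨hm1, hD1⟩ := hswap e f v a b w he hf hef hev hfv hw hwo
  obtain ⟨w', hw', hwo'⟩ := aux_removal hMmin hf he hef.symm hfv hev
  obtain ⟨-, hD2⟩ := hswap f e v b a w' hf he hef.symm hfv hev hw' hwo'
  have hveM : v ∈ e := by rw [hev]; exact Sym2.mem_mk_left v a
  have haeM : a ∈ e := by rw [hev]; exact Sym2.mem_mk_right v a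
  have heMf : e ∈ M \ {f} := ⟨he, hef⟩
  -- M \ {f} is a matching
  have hmf : NoSharedVertex (M \ {f}) :=
    aux_noshared_mono (Set.subset_insert _ _) hm1
  set D3 := edgeVerts (M \ {f}) with hD3
  have hvD3 : v ∈ D3 := ⟨e, heMf, hveM⟩
  have haD3 : a ∈ D3 := ⟨e, heMf, haeM⟩
  have hadjvb : G.Adj v b := by
    have := hMmin.1.1 hf; rwa [hfv, SimpleGraph.mem_edgeSet] at this
  -- D3 is dominating
  have hdom3 : IsDomSet G D3 := by
    intro x hx
    obtain ⟨g, hg, hgx⟩ := hMmin.1.2 x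
    by_cases hgf : g = f
    · rw [hgf] at hgx
      rcases hgx with hxf | ⟨u, huf, hadj⟩
      · rw [hfv, Sym2.mem_iff] at hxf
        rcases hxf with hxv | hxb
        · exact absurd (show x ∈ D3 from ⟨e, heMf, by rw [hxv]; exact hveM⟩) hx
        · exact ⟨v, hvD3, by rw [hxb]; exact hadjvb⟩
      · rw [hfv, Sym2.mem_iff] at huf
        rcases huf with hu | hu
        · rw [hu] at hadj
          exact ⟨v, hvD3, hadj⟩
        · rw [hu] at hadj
          by_cases hxM : x ∈ edgeVerts M
          · obtain ⟨h, hh, hxh⟩ := hxM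
            by_cases hhf : h = f
            · rw [hhf, hfv, Sym2.mem_iff] at hxh
              rcases hxh with hxv | hxb
              · exact absurd (show x ∈ D3 from ⟨e, heMf, by rw [hxv]; exact hveM⟩) hx
              · rw [hxb] at hadj
                exact absurd hadj (G.irrefl)
            · exact absurd (show x ∈ D3 from ⟨h, ⟨hh, hhf⟩, hxh⟩) hx
          · obtain ⟨-, hDx⟩ := hswap e f v a b x he hf hef hev hfv hadj hxM
            have hxD : x ∈ D := by rw [← hDx]; exact Set.mem_insert x _
            rw [← hD2] at hxD
            rcases hxD with hxw' | hxVM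
            · refine ⟨a, haD3, ?_⟩
              rw [hxw']
              exact hw'
            · exact absurd hxVM hxM
    · rcases hgx with hxg | ⟨u, hug, hadj⟩
      · exact absurd (show x ∈ D3 from ⟨g, ⟨hg, hgf⟩, hxg⟩) hx
      · exact ⟨u, ⟨g, ⟨hg, hgf⟩, hug⟩, hadj⟩
  -- cardinalities give a contradiction
  have hsub3 : M \ {f} ⊆ G.edgeSet := fun x hx => hMmin.1.1 hx.1
  have hD3card : D3.ncard = 2 * (M \ {f}).ncard := aux_matching_card _ _ rfl hsub3 hmf
  have hMx1sub : insert s(b, w) (M \ {f}) ⊆ G.edgeSet := by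
    rintro x (hx | hx)
    · rw [hx, SimpleGraph.mem_edgeSet]; exact hw
    · exact hMmin.1.1 hx.1
  have hDcard : D.ncard = 2 * M.ncard := by
    obtain ⟨-, heq1, hcard1⟩ := aux_swap hMmin he hf hef hev hfv hw hwo
    have := aux_matching_card _ _ rfl hMx1sub hm1
    rw [heq1, hD1] at this
    rw [this, hcard1]
  have hfm : (M \ {f}).ncard + 1 = M.ncard := Set.ncard_diff_singleton_add_one hf (Set.toFinite M)
  have hle := hD.2 D3 ⟨hdom3, M \ {f}, aux_pm_self hsub3 hmf⟩
  omega

end Aux3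

theorem stmt8 [Fintype V] (G : SimpleGraph V) (hG : NoIsolated G) (D : Set V) :
    (IsMinPairedDomSet G D ∧ ∀ D' : Set V, IsMinPairedDomSet G D' → D' = D) ↔
      (∀ M : Set (Sym2 V), IsMinEvDomSet G M → edgeVerts M = D) := by
  constructor
  · rintro ⟨hD, hu⟩ M hM
    have hm := aux_forward_matching hD hu M hM
    exact hu _ (aux_matching_min_paired hM hm)
  · intro h
    obtain ⟨Ms, hmin, hm⟩ := aux_exists_min_evdom_matching hG
    have hDeq : edgeVerts Ms = D := h Ms hmin
    have hDmin : IsMinPairedDomSet G D := hDeq ▸ aux_matching_min_paired hmin hm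
    refine ⟨hDmin, ?_⟩
    intro D'' hD''
    obtain ⟨hdom'', P, hpm⟩ := hD''.1
    obtain ⟨hPev, hPns, hPeq⟩ := aux_pm_facts hdom'' hpm
    have hP2 : D''.ncard = 2 * P.ncard := by
      rw [← hPeq]; exact aux_matching_card _ P rfl hpm.1 hPns
    have hM2 : D.ncard = 2 * Ms.ncard := by
      rw [← hDeq]; exact aux_matching_card _ Ms rfl hmin.1.1 hm
    have h1 := hD''.2 D hDmin.1
    have h2 := hDmin.2 D'' hD''.1
    have hPmin : IsMinEvDomSet G P := by
      refine ⟨hPev, fun M' hM' => ?_⟩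
      have := hmin.2 M' hM'
      omega
    rw [← hPeq]
    exact h P hPmin
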